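/- If T* = max_{j∈J} T_j < 1, then every nonnegative solution of the within-host bacterial dynamics system converges to the bacteria-free stationary state E⁰ = (B₀, 0, 0, 0, 0): the total bacterial population N(t) = N_s(t)+N_m(t)+N_p(t)+N_{m.p}(t) tends to 0 and B(t) tends to B₀ as t → ∞. -/

import Mathlib

open Filter Set Matrix


section helpers

lemma gron_aux {f f' : ℝ → ℝ} {a k ε δ : ℝ} (hk : 0 < k) (hε : 0 ≤ ε)
    (hd : ∀ t, a ≤ t → HasDerivAt f (f' t) t)
    (hb : ∀ t, a ≤ t → f' t ≤ -k * f t + ε)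
    (hδ : f a ≤ δ) :
    ∀ t, a ≤ t → f t ≤ δ * Real.exp (-k * (t - a)) + ε / k := by
  intro t ht
  have key : f t ≤ gronwallBound δ (-k) ε (t - a) :=
    le_gronwallBound_of_liminf_deriv_right_le (a := a) (b := t)
      (fun s hs => ((hd s hs.1).continuousAt).continuousWithinAt)
      (fun s hs r hr => by
        simpa [slope_def_field, div_eq_inv_mul] using
          ((hd s hs.1).hasDerivWithinAt (s := Ici s)).liminf_right_slope_le hr)
      hδ (fun s hs => hb s hs.1) t ⟨ht, le_refl t⟩
  refine key.trans ?_
  rw [gronwallBound_of_K_ne_0 (neg_ne_zero.2 hk.ne')]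
  have he : Real.exp (-k * (t - a)) ≤ 1 := by
    rw [Real.exp_le_one_iff]; nlinarith
  have hepos : 0 < Real.exp (-k * (t - a)) := Real.exp_pos _
  have : ε / -k * (Real.exp (-k * (t - a)) - 1) ≤ ε / k := by
    rw [div_neg, neg_mul]
    have h1 : ε / k * (Real.exp (-k * (t - a)) - 1) ≥ -(ε / k) := by
      have : 0 ≤ ε / k := by positivity
      nlinarith
    linarith
  linarith

lemma exp_decay (δ k a : ℝ) (hk : 0 < k) :
    Filter.Tendsto (fun t => δ * Real.exp (-k * (t - a))) Filter.atTop (nhds 0) := by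
  have h1 : Filter.Tendsto (fun t : ℝ => -k * (t - a)) Filter.atTop Filter.atBot :=
    Filter.Tendsto.const_mul_atTop_of_neg (neg_neg_iff_pos.2 hk)
      (tendsto_atTop_add_const_right _ _ tendsto_id)
  have h2 := Real.tendsto_exp_atBot.comp h1
  simpa using h2.const_mul δ

end helpers


/-- Parameters of the within-host bacterial dynamics system:
`Lam` = Λ (nutrient inflow), `d` = nutrient washout rate, `ds,dm,dp,dmp` = death
rates `d_j`, `bs,bm,bp,bmp` = consumption rates `β_j`, `ts,tm,tp,tmp` = conversion
factors `τ_j`, `es,em,ep,emp` = mutation ratios `ε_j`, `th` = segregation ratio θ,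
`al` = HGT flux α, and `aH, bH` the Beddington–DeAngelis constants. -/
structure ModelParams where
  Lam : ℝ
  d : ℝ
  ds : ℝ
  dm : ℝ
  dp : ℝ
  dmp : ℝ
  bs : ℝ
  bm : ℝ
  bp : ℝ
  bmp : ℝ
  ts : ℝ
  tm : ℝ
  tp : ℝ
  tmp : ℝ
  es : ℝ
  em : ℝ
  ep : ℝ
  emp : ℝ
  th : ℝ
  al : ℝ
  aH : ℝ
  bH : ℝ

/-- Right-hand side of the ODE system, with state `x = (B, N_s, N_m, N_p, N_{m.p})`. -/
noncomputable def rhs (p : ModelParams) (x : Fin 5 → ℝ) : Fin 5 → ℝ :=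
  ![p.Lam - p.d * x 0 - x 0 * (p.bs * x 1 + p.bm * x 2 + p.bp * x 3 + p.bmp * x 4),
    p.ts * p.bs * (1 - p.es) * x 0 * x 1 - p.ds * x 1 + p.em * p.tm * p.bm * x 0 * x 2
      + p.th * p.tp * p.bp * x 0 * x 3
      - (p.al / (p.aH + p.bH * (x 1 + x 2 + x 3 + x 4))) * x 1 * (x 3 + x 4),
    p.tm * p.bm * (1 - p.em) * x 0 * x 2 - p.dm * x 2 + p.es * p.ts * p.bs * x 0 * x 1
      + p.th * p.tmp * p.bmp * x 0 * x 4
      - (p.al / (p.aH + p.bH * (x 1 + x 2 + x 3 + x 4))) * x 2 * (x 3 + x 4),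
    p.tp * p.bp * (1 - p.th) * (1 - p.ep) * x 0 * x 3 - p.dp * x 3
      + p.emp * (1 - p.th) * p.tmp * p.bmp * x 0 * x 4
      + (p.al / (p.aH + p.bH * (x 1 + x 2 + x 3 + x 4))) * x 1 * (x 3 + x 4),
    p.tmp * p.bmp * (1 - p.th) * (1 - p.emp) * x 0 * x 4 - p.dmp * x 4
      + p.ep * (1 - p.th) * p.tp * p.bp * x 0 * x 3
      + (p.al / (p.aH + p.bH * (x 1 + x 2 + x 3 + x 4))) * x 2 * (x 3 + x 4)]

/-- Natural hypotheses on the parameters. -/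
def ModelParams.Valid (p : ModelParams) : Prop :=
  0 < p.Lam ∧ 0 < p.d ∧ 0 < p.ds ∧ 0 < p.dm ∧ 0 < p.dp ∧ 0 < p.dmp ∧
  0 ≤ p.bs ∧ 0 ≤ p.bm ∧ 0 ≤ p.bp ∧ 0 ≤ p.bmp ∧
  0 ≤ p.ts ∧ 0 ≤ p.tm ∧ 0 ≤ p.tp ∧ 0 ≤ p.tmp ∧
  p.es ∈ Set.Ioo (0:ℝ) 1 ∧ p.em ∈ Set.Ioo (0:ℝ) 1 ∧ p.ep ∈ Set.Ioo (0:ℝ) 1 ∧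
  p.emp ∈ Set.Ioo (0:ℝ) 1 ∧ p.th ∈ Set.Ioo (0:ℝ) 1 ∧
  0 ≤ p.al ∧ 0 ≤ p.aH ∧ 0 ≤ p.bH ∧ 0 < p.aH + p.bH

/-- `x : ℝ → Fin 5 → ℝ` is a global-in-time (for `t ≥ 0`) solution of the system. -/
noncomputable def IsSolution (p : ModelParams) (x : ℝ → Fin 5 → ℝ) : Prop :=
  ∀ t : ℝ, 0 ≤ t → ∀ i : Fin 5, HasDerivAt (fun s => x s i) (rhs p (x t) i) t

set_option maxHeartbeats 1000000 in
/-- If `T* = max_j T_j < 1` (where `T_j = B₀ τ_j β_j / d_j`,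
`B₀ = Λ/d`), then along every nonnegative solution `N(t) → 0` and `B(t) → B₀`
as `t → ∞`: the bacteria-free state `E⁰ = (B₀,0,0,0,0)` is globally
asymptotically attractive. -/
theorem extinction_of_bacteria
    (p : ModelParams) (hp : p.Valid)
    (B0 Tstar : ℝ) (hB0 : B0 = p.Lam / p.d)
    (hT : Tstar = max (max (B0 * p.ts * p.bs / p.ds) (B0 * p.tm * p.bm / p.dm))
                      (max (B0 * p.tp * p.bp / p.dp) (B0 * p.tmp * p.bmp / p.dmp)))
    (hTlt : Tstar < 1)
    (x : ℝ → Fin 5 → ℝ) (hx : IsSolution p x)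
    (hnn : ∀ t : ℝ, 0 ≤ t → ∀ i, 0 ≤ x t i) :
    Filter.Tendsto (fun t => x t 1 + x t 2 + x t 3 + x t 4) Filter.atTop (nhds 0) ∧
    Filter.Tendsto (fun t => x t 0) Filter.atTop (nhds B0) := by
  
  obtain ⟨hLam, hd, hds, hdm, hdp, hdmp, hbs, hbm, hbp, hbmp,
    hts, htm, htp, htmp, hes, hem, hep, hemp, hth, hal, haH, hbH, haHbH⟩ := hp
  have hB0pos : 0 < B0 := hB0 ▸ div_pos hLam hd
  -- derivative facts
  have hxB : ∀ t, 0 ≤ t → HasDerivAt (fun s => x s 0)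
      (p.Lam - p.d * x t 0
        - x t 0 * (p.bs * x t 1 + p.bm * x t 2 + p.bp * x t 3 + p.bmp * x t 4)) t := by
    intro t ht; simpa [rhs] using hx t ht 0
  have hxN : ∀ t, 0 ≤ t → HasDerivAt (fun s => x s 1 + x s 2 + x s 3 + x s 4)
      ((p.ts * p.bs * x t 0 - p.ds) * x t 1 + (p.tm * p.bm * x t 0 - p.dm) * x t 2
        + (p.tp * p.bp * x t 0 - p.dp) * x t 3 + (p.tmp * p.bmp * x t 0 - p.dmp) * x t 4) t := by
    intro t ht
    have h := (((hx t ht 1).add (hx t ht 2)).add (hx t ht 3)).add (hx t ht 4)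
    have e : rhs p (x t) 1 + rhs p (x t) 2 + rhs p (x t) 3 + rhs p (x t) 4
        = (p.ts * p.bs * x t 0 - p.ds) * x t 1 + (p.tm * p.bm * x t 0 - p.dm) * x t 2
          + (p.tp * p.bp * x t 0 - p.dp) * x t 3 + (p.tmp * p.bmp * x t 0 - p.dmp) * x t 4 := by
      simp only [rhs]
      norm_num [Matrix.cons_val_one, Matrix.cons_val_two, Matrix.cons_val_three, Matrix.cons_val_four, Matrix.head_cons, Fin.isValue]
      ring
    rw [e] at h; exact h
  -- thresholds
  have hthresh : ∀ tb dj : ℝ, 0 < dj → B0 * tb / dj ≤ Tstar → tb * B0 < dj := by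
    intro tb dj hdj hle
    have h1 : B0 * tb / dj < 1 := lt_of_le_of_lt hle hTlt
    have := (div_lt_one hdj).1 h1
    nlinarith
  have hms : p.ts * p.bs * B0 < p.ds := by
    have := hthresh (p.ts * p.bs) p.ds hds
      (by rw [hT]
          exact le_max_of_le_left (le_trans (le_of_eq (by ring)) (le_max_left _ _)))
    linarith
  have hmm : p.tm * p.bm * B0 < p.dm := by
    have := hthresh (p.tm * p.bm) p.dm hdm
      (by rw [hT]
          exact le_max_of_le_left (le_trans (le_of_eq (by ring)) (le_max_right _ _)))
    linarith
  have hmp : p.tp * p.bp * B0 < p.dp := by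
    have := hthresh (p.tp * p.bp) p.dp hdp
      (by rw [hT]
          exact le_max_of_le_right (le_trans (le_of_eq (by ring)) (le_max_left _ _)))
    linarith
  have hmmp : p.tmp * p.bmp * B0 < p.dmp := by
    have := hthresh (p.tmp * p.bmp) p.dmp hdmp
      (by rw [hT]
          exact le_max_of_le_right (le_trans (le_of_eq (by ring)) (le_max_right _ _)))
    linarith
  set m : ℝ := min (min (p.ds - p.ts * p.bs * B0) (p.dm - p.tm * p.bm * B0))
      (min (p.dp - p.tp * p.bp * B0) (p.dmp - p.tmp * p.bmp * B0)) with hm_def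
  have hm : 0 < m := by
    apply lt_min (lt_min (by linarith) (by linarith)) (lt_min (by linarith) (by linarith))
  set K : ℝ := max (max (p.ts * p.bs) (p.tm * p.bm)) (max (p.tp * p.bp) (p.tmp * p.bmp))
    with hK_def
  have hK : 0 ≤ K := le_trans (mul_nonneg hts hbs) (le_max_of_le_left (le_max_left _ _))
  set η : ℝ := m / (2 * (K + 1)) with hη_def
  have hη : 0 < η := by positivity
  set c : ℝ := m / 2 with hc_def
  have hc : 0 < c := by positivity
  have hKη : (K + 1) * η = c := by
    rw [hη_def, hc_def]; field_simp
  have hkey : ∀ tb dj : ℝ, 0 ≤ tb → tb ≤ K → m ≤ dj - tb * B0 →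
      tb * (B0 + η) - dj ≤ -c := by
    intro tb dj htb htbK hmd
    have h1 : tb * η ≤ K * η := mul_le_mul_of_nonneg_right htbK hη.le
    nlinarith
  -- upper bound on B
  set δB : ℝ := max (x 0 0 - B0) 0 with hδB_def
  have hδB : 0 ≤ δB := le_max_right _ _
  have hSnn : ∀ t, 0 ≤ t →
      0 ≤ p.bs * x t 1 + p.bm * x t 2 + p.bp * x t 3 + p.bmp * x t 4 := by
    intro t ht
    have h1 := hnn t ht 1; have h2 := hnn t ht 2; have h3 := hnn t ht 3; have h4 := hnn t ht 4
    have := mul_nonneg hbs h1; have := mul_nonneg hbm h2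
    have := mul_nonneg hbp h3; have := mul_nonneg hbmp h4
    linarith
  have hBgron : ∀ t, 0 ≤ t →
      x t 0 - B0 ≤ δB * Real.exp (-p.d * (t - 0)) + 0 / p.d := by
    refine gron_aux hd le_rfl (fun t ht => (hxB t ht).sub_const B0) ?_ (le_max_left _ _)
    intro t ht
    have hB0eq : p.Lam = p.d * B0 := by rw [hB0]; field_simp
    have hBS : 0 ≤ x t 0 * (p.bs * x t 1 + p.bm * x t 2 + p.bp * x t 3 + p.bmp * x t 4) :=
      mul_nonneg (hnn t ht 0) (hSnn t ht)
    show p.Lam - p.d * x t 0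
        - x t 0 * (p.bs * x t 1 + p.bm * x t 2 + p.bp * x t 3 + p.bmp * x t 4)
      ≤ -p.d * (x t 0 - B0) + 0
    linarith
  have hBle : ∀ t, 0 ≤ t → x t 0 ≤ B0 + δB * Real.exp (-p.d * t) := by
    intro t ht
    have := hBgron t ht
    simp only [zero_div, add_zero, sub_zero] at this
    linarith
  have hBM : ∀ t, 0 ≤ t → x t 0 ≤ B0 + δB := by
    intro t ht
    have h1 := hBle t ht
    have h2 : Real.exp (-p.d * t) ≤ 1 := by
      rw [Real.exp_le_one_iff]; nlinarith
    nlinarith [Real.exp_pos (-p.d * t)]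
  -- eventual bound B ≤ B0 + η
  have hdecayB := exp_decay δB p.d 0 hd
  have hevB : ∀ᶠ t in atTop, x t 0 ≤ B0 + η := by
    filter_upwards [hdecayB.eventually (eventually_le_nhds hη), eventually_ge_atTop (0:ℝ)]
      with t h1 h2
    have := hBle t h2
    simp only [sub_zero] at h1
    linarith
  obtain ⟨t₁, ht₁⟩ := eventually_atTop.1 (hevB.and (eventually_ge_atTop (0:ℝ)))
  have ht₁0 : (0:ℝ) ≤ t₁ := (ht₁ t₁ le_rfl).2
  -- decay of N
  have hNbound : ∀ t, t₁ ≤ t →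
      (p.ts * p.bs * x t 0 - p.ds) * x t 1 + (p.tm * p.bm * x t 0 - p.dm) * x t 2
        + (p.tp * p.bp * x t 0 - p.dp) * x t 3 + (p.tmp * p.bmp * x t 0 - p.dmp) * x t 4
      ≤ -c * (x t 1 + x t 2 + x t 3 + x t 4) + 0 := by
    intro t ht
    obtain ⟨hBη, ht0⟩ := ht₁ t ht
    have hterm : ∀ tb dj : ℝ, 0 ≤ tb → tb ≤ K → m ≤ dj - tb * B0 → ∀ i : Fin 5, 0 ≤ x t i →
        (tb * x t 0 - dj) * x t i ≤ -c * x t i := by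
      intro tb dj htb htbK hmd i hxi
      have h1 : tb * x t 0 ≤ tb * (B0 + η) := mul_le_mul_of_nonneg_left hBη htb
      have h2 : tb * (B0 + η) - dj ≤ -c := hkey tb dj htb htbK hmd
      have : tb * x t 0 - dj ≤ -c := by linarith
      exact mul_le_mul_of_nonneg_right this hxi
    have e1 := hterm (p.ts * p.bs) p.ds (mul_nonneg hts hbs)
      (le_max_of_le_left (le_max_left _ _))
      (min_le_of_left_le (min_le_left _ _)) 1 (hnn t ht0 1)
    have e2 := hterm (p.tm * p.bm) p.dm (mul_nonneg htm hbm)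
      (le_max_of_le_left (le_max_right _ _))
      (min_le_of_left_le (min_le_right _ _)) 2 (hnn t ht0 2)
    have e3 := hterm (p.tp * p.bp) p.dp (mul_nonneg htp hbp)
      (le_max_of_le_right (le_max_left _ _))
      (min_le_of_right_le (min_le_left _ _)) 3 (hnn t ht0 3)
    have e4 := hterm (p.tmp * p.bmp) p.dmp (mul_nonneg htmp hbmp)
      (le_max_of_le_right (le_max_right _ _))
      (min_le_of_right_le (min_le_right _ _)) 4 (hnn t ht0 4)
    linarith
  have hNgron : ∀ t, t₁ ≤ t →
      x t 1 + x t 2 + x t 3 + x t 4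
        ≤ (x t₁ 1 + x t₁ 2 + x t₁ 3 + x t₁ 4) * Real.exp (-c * (t - t₁)) + 0 / c :=
    gron_aux hc le_rfl (fun t ht => hxN t (le_trans ht₁0 ht)) hNbound le_rfl
  have hNtend : Filter.Tendsto (fun t => x t 1 + x t 2 + x t 3 + x t 4) atTop (nhds 0) := by
    refine tendsto_of_tendsto_of_tendsto_of_le_of_le' tendsto_const_nhds
      (exp_decay (x t₁ 1 + x t₁ 2 + x t₁ 3 + x t₁ 4) c t₁ hc) ?_ ?_
    · filter_upwards [eventually_ge_atTop (0:ℝ)] with t ht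
      have h1 := hnn t ht 1; have h2 := hnn t ht 2; have h3 := hnn t ht 3; have h4 := hnn t ht 4
      linarith
    · filter_upwards [eventually_ge_atTop t₁] with t ht
      have := hNgron t ht
      simp only [zero_div, add_zero] at this
      linarith
  refine ⟨hNtend, ?_⟩
  -- B tends to B0
  have hStend : Filter.Tendsto
      (fun t => p.bs * x t 1 + p.bm * x t 2 + p.bp * x t 3 + p.bmp * x t 4) atTop (nhds 0) := by
    have hC := hNtend.const_mul (p.bs + p.bm + p.bp + p.bmp)
    rw [mul_zero] at hC
    refine tendsto_of_tendsto_of_tendsto_of_le_of_le' tendsto_const_nhds hC ?_ ?_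
    · filter_upwards [eventually_ge_atTop (0:ℝ)] with t ht
      exact hSnn t ht
    · filter_upwards [eventually_ge_atTop (0:ℝ)] with t ht
      have h1 := hnn t ht 1; have h2 := hnn t ht 2; have h3 := hnn t ht 3; have h4 := hnn t ht 4
      nlinarith
  have hBStend : Filter.Tendsto (fun t =>
      x t 0 * (p.bs * x t 1 + p.bm * x t 2 + p.bp * x t 3 + p.bmp * x t 4)) atTop (nhds 0) := by
    have hC := hStend.const_mul (B0 + δB)
    rw [mul_zero] at hC
    refine tendsto_of_tendsto_of_tendsto_of_le_of_le' tendsto_const_nhds hC ?_ ?_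
    · filter_upwards [eventually_ge_atTop (0:ℝ)] with t ht
      exact mul_nonneg (hnn t ht 0) (hSnn t ht)
    · filter_upwards [eventually_ge_atTop (0:ℝ)] with t ht
      exact mul_le_mul_of_nonneg_right (hBM t ht) (hSnn t ht)
  have hftend : Filter.Tendsto (fun t => x t 0 - B0) atTop (nhds 0) := by
    rw [NormedAddCommGroup.tendsto_nhds_zero]
    intro ε hε
    have hε4 : 0 < p.d * ε / 4 := by positivity
    obtain ⟨t₂, ht₂⟩ := eventually_atTop.1
      (((hBStend.eventually (eventually_le_nhds hε4)).and (eventually_ge_atTop (0:ℝ))))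
    have ht₂0 : (0:ℝ) ≤ t₂ := (ht₂ t₂ le_rfl).2
    have hB0eq : p.Lam = p.d * B0 := by rw [hB0]; field_simp
    -- upper bound for f = B - B0
    have hup : ∀ t, t₂ ≤ t → x t 0 - B0
        ≤ |x t₂ 0 - B0| * Real.exp (-p.d * (t - t₂)) + (p.d * ε / 4) / p.d := by
      refine gron_aux hd hε4.le (fun t ht => (hxB t (le_trans ht₂0 ht)).sub_const B0) ?_
        (le_abs_self _)
      intro t ht
      have hBS := mul_nonneg (hnn t (le_trans ht₂0 ht) 0) (hSnn t (le_trans ht₂0 ht))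
      show p.Lam - p.d * x t 0
          - x t 0 * (p.bs * x t 1 + p.bm * x t 2 + p.bp * x t 3 + p.bmp * x t 4)
        ≤ -p.d * (x t 0 - B0) + p.d * ε / 4
      linarith
    -- lower bound
    have hlo : ∀ t, t₂ ≤ t → B0 - x t 0
        ≤ |x t₂ 0 - B0| * Real.exp (-p.d * (t - t₂)) + (p.d * ε / 4) / p.d := by
      have hder : ∀ t, t₂ ≤ t → HasDerivAt (fun s => B0 - x s 0)
          (-(p.Lam - p.d * x t 0
            - x t 0 * (p.bs * x t 1 + p.bm * x t 2 + p.bp * x t 3 + p.bmp * x t 4))) t := by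
        intro t ht
        have h := (hasDerivAt_const t B0).sub (hxB t (le_trans ht₂0 ht)); rwa [zero_sub] at h
      refine gron_aux hd hε4.le hder ?_ (by rw [show B0 - x t₂ 0 = -(x t₂ 0 - B0) from by ring]; exact neg_le_abs _)
      intro t ht
      have hBS := (ht₂ t ht).1
      show -(p.Lam - p.d * x t 0
          - x t 0 * (p.bs * x t 1 + p.bm * x t 2 + p.bp * x t 3 + p.bmp * x t 4))
        ≤ -p.d * (B0 - x t 0) + p.d * ε / 4
      linarith
    have hdiv : (p.d * ε / 4) / p.d = ε / 4 := by field_simp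
    have hdecay := exp_decay (|x t₂ 0 - B0|) p.d t₂ hd
    filter_upwards [eventually_ge_atTop t₂,
      hdecay.eventually (eventually_le_nhds (by positivity : (0:ℝ) < ε / 4))] with t h1 h2
    have hu := hup t h1; have hl := hlo t h1
    rw [hdiv] at hu hl
    rw [Real.norm_eq_abs, abs_lt]
    constructor <;> linarith
  have := hftend.add_const B0
  simpa using this
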